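/- Let m and t be positive integers and let q be a power of the prime 2. Then (m_{2'} · (q^m - 1))^t · h_2(t) ≤ (3(q^3 - 1))^(mt/3) · h_2(mt/3), where m_{2'} is the largest odd divisor of m, h_2(x) := 3^((x-1)/2), and the exponents mt/3 and (mt/3 - 1)/2 are real numbers. -/

import Mathlib

/-- `h_p(x)` from the paper: `3^((x-1)/2)` if `p = 2`, `20^((x-1)/4)` if `p = 3`,
and `((p-1)!)^((x-1)/(p-2))` if `p > 3`.  Real exponents throughout. -/
noncomputable def hpfun (p : ℕ) (x : ℝ) : ℝ :=
  if p = 2 then (3 : ℝ) ^ ((x - 1) / 2)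
  else if p = 3 then (20 : ℝ) ^ ((x - 1) / 4)
  else ((Nat.factorial (p - 1) : ℝ)) ^ ((x - 1) / ((p : ℝ) - 2))

lemma natkey : ∀ m : ℕ, 4 ≤ m → 27 * 64 ^ m * m ^ 6 ≤ 1323 ^ m := by
  intro m hm
  induction m with
  | zero => omega
  | succ n ih =>
    rcases Nat.lt_or_ge n 4 with h | h
    · interval_cases n
      · omega
      · omega
      · omega
      · norm_num
    · have ih' := ih h
      have h1 : (4*(n+1))^6 ≤ (5*n)^6 := Nat.pow_le_pow_left (by omega) 6
      have hstep : 64 * (n+1)^6 ≤ 1323 * n^6 := by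
        have h2 : 4096*(n+1)^6 ≤ 15625*n^6 := by
          calc 4096*(n+1)^6 = (4*(n+1))^6 := by ring
            _ ≤ (5*n)^6 := h1
            _ = 15625*n^6 := by ring
        omega
      calc 27 * 64 ^ (n+1) * (n+1)^6 = 27 * 64^n * (64 * (n+1)^6) := by ring
        _ ≤ 27 * 64^n * (1323 * n^6) := Nat.mul_le_mul_left _ hstep
        _ = 1323 * (27 * 64^n * n^6) := by ring
        _ ≤ 1323 * 1323^n := Nat.mul_le_mul_left _ ih'
        _ = 1323^(n+1) := by ring

lemma pow_chain (u v M : ℝ) (hu : 0 ≤ u) (hv : 49*u ≤ 64*v) (m : ℕ) (hm : 1 ≤ m)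
    (hM0 : 0 ≤ M) (hM : 27*64^m*M ≤ 1323^m) :
    M * u^m ≤ 27^(m-1) * v^m := by
  have hc : (0:ℝ) < 27*64^m := by positivity
  rw [← mul_le_mul_iff_right₀ hc]
  have h27 : (27:ℝ)*27^(m-1) = 27^m := by
    rw [← pow_succ']
    congr 1; omega
  calc 27*64^m*(M*u^m) = (27*64^m*M)*u^m := by ring
    _ ≤ 1323^m * u^m := mul_le_mul_of_nonneg_right hM (by positivity)
    _ = 27^m * (49*u)^m := by rw [← mul_pow, ← mul_pow]; ring_nf
    _ ≤ 27^m * (64*v)^m :=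
        mul_le_mul_of_nonneg_left (pow_le_pow_left₀ (by positivity) hv m) (by positivity)
    _ = 27*64^m*(27^(m-1)*v^m) := by rw [mul_pow, ← h27]; ring

lemma key6 (q : ℝ) (hq : 2 ≤ q) (m a : ℕ) (hm : 1 ≤ m) (ha : a ≤ m)
    (h2 : m = 2 → a ≤ 1) :
    (a:ℝ)^6 * (q^m - 1)^6 ≤ 27^(m-1) * (q^3-1)^(2*m) := by
  have hq0 : (0:ℝ) < q := by linarith
  have hq3 : (8:ℝ) ≤ q^3 := by nlinarith [sq_nonneg q, sq_nonneg (q-2)]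
  have hqm1 : (1:ℝ) ≤ q^m := one_le_pow₀ (by linarith)
  have haR : (a:ℝ) ≤ m := by exact_mod_cast ha
  rcases Nat.lt_or_ge m 4 with h | h
  · interval_cases m
    · -- m = 1
      have ha1 : (a:ℝ) ≤ 1 := by exact_mod_cast ha
      have h1 : ((q-1)^3)^2 ≤ (q^3-1)^2 := by nlinarith [sq_nonneg (q-1), sq_nonneg q]
      have h2 : (a:ℝ)^6 ≤ 1 := by
        calc (a:ℝ)^6 ≤ 1^6 := pow_le_pow_left₀ (by positivity) ha1 6
          _ = 1 := one_pow 6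
      calc (a:ℝ)^6 * (q^1-1)^6 ≤ 1 * (q^1-1)^6 :=
            mul_le_mul_of_nonneg_right h2 (by positivity)
        _ = ((q-1)^3)^2 := by ring
        _ ≤ (q^3-1)^2 := h1
        _ = 27^(1-1) * (q^3-1)^(2*1) := by norm_num
    · -- m = 2
      have ha1 : (a:ℝ) ≤ 1 := by exact_mod_cast h2 rfl
      have h6 : (a:ℝ)^6 ≤ 1 := by
        calc (a:ℝ)^6 ≤ 1^6 := pow_le_pow_left₀ (by positivity) ha1 6
          _ = 1 := one_pow 6
      have hA : (q^2-1)^6 ≤ (q^2)^6 := pow_le_pow_left₀ (by nlinarith) (by linarith [sq_nonneg q]) 6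
      have hB : (7*q^3)^4 ≤ (8*(q^3-1))^4 := pow_le_pow_left₀ (by positivity) (by nlinarith) 4
      have : (q^2-1)^6 ≤ 27 * (q^3-1)^4 := by nlinarith [hA, hB, pow_nonneg (by nlinarith : (0:ℝ) ≤ q^2-1) 6]
      calc (a:ℝ)^6 * (q^2-1)^6 ≤ 1 * (q^2-1)^6 :=
            mul_le_mul_of_nonneg_right h6 (by positivity)
        _ ≤ 27 * (q^3-1)^4 := by linarith
        _ = 27^(2-1) * (q^3-1)^(2*2) := by norm_num
    · -- m = 3
      have h6 : (a:ℝ)^6 ≤ 729 := by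
        calc (a:ℝ)^6 ≤ 3^6 := pow_le_pow_left₀ (by positivity) (by exact_mod_cast ha) 6
          _ = 729 := by norm_num
      have hnn : (0:ℝ) ≤ (q^3-1)^6 := by positivity
      calc (a:ℝ)^6 * (q^3-1)^6 ≤ 729 * (q^3-1)^6 := mul_le_mul_of_nonneg_right h6 hnn
        _ = 27^(3-1) * (q^3-1)^(2*3) := by norm_num
  · -- m ≥ 4
    have h1 : (a:ℝ)^6 * (q^m-1)^6 ≤ (m:ℝ)^6 * (q^m)^6 := by
      have := pow_le_pow_left₀ (by positivity : (0:ℝ) ≤ (a:ℝ)) haR 6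
      have := pow_le_pow_left₀ (by linarith : (0:ℝ) ≤ q^m - 1) (by linarith : q^m - 1 ≤ q^m) 6
      exact mul_le_mul ‹(a:ℝ)^6 ≤ (m:ℝ)^6› ‹(q^m-1)^6 ≤ (q^m)^6› (by positivity) (by positivity)
    have hn : (27:ℝ)*64^m*(m:ℝ)^6 ≤ 1323^m := by exact_mod_cast natkey m h
    have hv : 49*(q^6) ≤ 64*((q^3-1)^2) := by nlinarith
    have h3 := pow_chain (q^6) ((q^3-1)^2) ((m:ℝ)^6) (by positivity) hv m hm (by positivity) hn
    calc (a:ℝ)^6 * (q^m-1)^6 ≤ (m:ℝ)^6 * (q^m)^6 := h1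
      _ = (m:ℝ)^6 * (q^6)^m := by rw [← pow_mul, ← pow_mul, mul_comm 6 m]
      _ ≤ 27^(m-1) * ((q^3-1)^2)^m := h3
      _ = 27^(m-1) * (q^3-1)^(2*m) := by rw [← pow_mul]

lemma keyK (q : ℝ) (hq : 2 ≤ q) (m a : ℕ) (hm : 1 ≤ m) (ha : a ≤ m)
    (h2 : m = 2 → a ≤ 1) :
    (a:ℝ) * (q^m - 1) ≤ (3:ℝ) ^ (((m:ℝ)-1)/2) * (q^3-1) ^ ((m:ℝ)/3) := by
  have hq0 : (0:ℝ) < q := by linarith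
  have hqm1 : (1:ℝ) ≤ q^m := one_le_pow₀ (by linarith)
  have hE : (0:ℝ) < q^3 - 1 := by nlinarith [sq_nonneg q, sq_nonneg (q-2)]
  have hL : 0 ≤ (a:ℝ) * (q^m-1) := mul_nonneg (Nat.cast_nonneg a) (by linarith)
  have hR : 0 ≤ (3:ℝ) ^ (((m:ℝ)-1)/2) * (q^3-1) ^ ((m:ℝ)/3) := by positivity
  rw [← pow_le_pow_iff_left₀ hL hR (by norm_num : (6:ℕ) ≠ 0), mul_pow, mul_pow]
  have e1 : ((3:ℝ) ^ (((m:ℝ)-1)/2))^6 = 27^(m-1) := by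
    rw [← Real.rpow_natCast ((3:ℝ) ^ (((m:ℝ)-1)/2)) 6, ← Real.rpow_mul (by norm_num)]
    have h : ((m:ℝ)-1)/2 * ((6:ℕ):ℝ) = ((3*(m-1) : ℕ):ℝ) := by
      push_cast [Nat.cast_sub hm]
      ring
    rw [h, Real.rpow_natCast, pow_mul]
    norm_num
  have e2 : ((q^3-1) ^ ((m:ℝ)/3))^6 = (q^3-1)^(2*m) := by
    rw [← Real.rpow_natCast ((q^3-1) ^ ((m:ℝ)/3)) 6, ← Real.rpow_mul hE.le]
    have h : (m:ℝ)/3 * ((6:ℕ):ℝ) = ((2*m : ℕ):ℝ) := by push_cast; ring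
    rw [h, Real.rpow_natCast]
  rw [e1, e2]
  exact key6 q hq m a hm ha h2

/-- Lemma 8.1(i): for positive integers `m, t` and `q` a power of `2`,
`(m_{2'} (q^m - 1))^t * h_2(t) ≤ (3(q^3 - 1))^(mt/3) * h_2(mt/3)`, where `m_{2'}` is the
largest odd divisor of `m` (i.e. `m / 2 ^ (m.factorization 2)`). -/
theorem mtbound_p_two
    (m t q f : ℕ) (hm : 0 < m) (ht : 0 < t) (hf : 0 < f) (hq : q = 2 ^ f) :
    (((m / 2 ^ (m.factorization 2) : ℕ) : ℝ) * ((q : ℝ) ^ m - 1)) ^ t * hpfun 2 (t : ℝ) ≤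
      (3 * ((q : ℝ) ^ 3 - 1)) ^ (((m * t : ℕ) : ℝ) / 3) * hpfun 2 (((m * t : ℕ) : ℝ) / 3) := by
  have hq2 : (2:ℝ) ≤ (q:ℝ) := by
    subst hq
    push_cast
    calc (2:ℝ) = 2^1 := (pow_one 2).symm
      _ ≤ 2^f := pow_le_pow_right₀ (by norm_num) hf
  set a := m / 2 ^ (m.factorization 2) with hadef
  have ha : a ≤ m := Nat.div_le_self _ _
  have h2 : m = 2 → a ≤ 1 := by
    intro hm2
    subst hm2
    simp [hadef, Nat.Prime.factorization_self Nat.prime_two]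
  have hK := keyK (q:ℝ) hq2 m a hm ha h2
  have hqm1 : (1:ℝ) ≤ (q:ℝ)^m := one_le_pow₀ (by linarith)
  have hE : (0:ℝ) < (q:ℝ)^3 - 1 := by nlinarith [sq_nonneg ((q:ℝ)-2)]
  have hL0 : 0 ≤ (a:ℝ) * ((q:ℝ)^m - 1) := mul_nonneg (Nat.cast_nonneg a) (by linarith)
  simp only [hpfun, if_pos rfl]
  set r1 : ℝ := ((m:ℝ)-1)/2
  set r2 : ℝ := (m:ℝ)/3
  set E : ℝ := (q:ℝ)^3 - 1
  calc ((a:ℝ) * ((q:ℝ)^m - 1)) ^ t * (3:ℝ)^(((t:ℝ)-1)/2)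
      ≤ ((3:ℝ)^r1 * E^r2) ^ t * (3:ℝ)^(((t:ℝ)-1)/2) :=
        mul_le_mul_of_nonneg_right (pow_le_pow_left₀ hL0 hK t) (by positivity)
    _ = (3 * E) ^ ((((m*t : ℕ)):ℝ)/3) * (3:ℝ)^(((((m*t:ℕ)):ℝ)/3 - 1)/2) := by
        rw [mul_pow, ← Real.rpow_natCast ((3:ℝ)^r1) t, ← Real.rpow_mul (by norm_num : (0:ℝ) ≤ 3),
          ← Real.rpow_natCast (E^r2) t, ← Real.rpow_mul hE.le,
          Real.mul_rpow (by norm_num : (0:ℝ) ≤ 3) hE.le,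
          mul_right_comm, ← Real.rpow_add (by norm_num : (0:ℝ) < 3),
          mul_right_comm ((3:ℝ) ^ (((m*t:ℕ):ℝ)/3)), ← Real.rpow_add (by norm_num : (0:ℝ) < 3)]
        congr 2
        · push_cast; ring
        · push_cast; ring
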